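/- Let 𝒟 contain all frames F ⊆ X with |F| ≤ 3. A choice rule c : 𝒟 → X has a FUM representation if and only if c satisfies IIFA (for all F' ⊆ F in 𝒟, if c(F) ∉ F \ F' then c(F) = c(F')). -/

import Mathlib

open Finset

/-- Frame-dependent utility: `u y + v y` if `y` is framed, `u y` otherwise. -/
noncomputable def UF {X : Type*} [DecidableEq X] (u v : X → ℝ) (F : Finset X) (y : X) : ℝ :=
  u y + (if y ∈ F then v y else 0)

/-- Characterization: on a domain `D` containing all frames of size at most 3,
`c` has a FUM representation iff `c` satisfies IIFA. -/
theorem fum_iff_IIFA {X : Type*} [Fintype X] [DecidableEq X]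
    (D : Set (Finset X)) (hD : ∀ F : Finset X, F.card ≤ 3 → F ∈ D)
    (c : Finset X → X) :
    (∃ u v : X → ℝ, (∀ x, 0 ≤ v x) ∧
        ∀ F ∈ D, Function.Injective (UF u v F) ∧ ∀ y : X, UF u v F y ≤ UF u v F (c F)) ↔
      (∀ F ∈ D, ∀ F' ∈ D, F' ⊆ F → c F ∉ F \ F' → c F = c F') := by
  constructor
  · rintro ⟨u, v, hv, hrep⟩
    intro F hF F' hF' hsub hnot
    obtain ⟨hinjF, hmaxF⟩ := hrep F hF
    obtain ⟨hinj', hmax'⟩ := hrep F' hF'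
    simp only [mem_sdiff, not_and, not_not] at hnot
    have hle : ∀ z, UF u v F' z ≤ UF u v F z := by
      intro z
      unfold UF
      by_cases hz : z ∈ F'
      · simp [hz, hsub hz]
      · simp only [hz, if_neg, not_false_iff]
        split_ifs with h
        · linarith [hv z]
        · exact le_refl _
    have heq : UF u v F (c F) = UF u v F' (c F) := by
      unfold UF
      by_cases hcf : c F ∈ F
      · simp [hcf, hnot hcf]
      · have : c F ∉ F' := fun hc => hcf (hsub hc)
        simp [hcf, this]
    have h1 : UF u v F' (c F') ≤ UF u v F' (c F) :=
      le_trans (le_trans (hle _) (hmaxF _)) (le_of_eq heq)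
    exact (hinj' (le_antisymm h1 (hmax' (c F)))).symm
  · intro h
    classical
    set x0 := c ∅ with hx0
    have card3 : ∀ x y z : X, ({x, y, z} : Finset X).card ≤ 3 := by
      intro x y z
      calc ({x, y, z} : Finset X).card ≤ ({y, z} : Finset X).card + 1 := card_insert_le _ _
        _ ≤ (({z} : Finset X).card + 1) + 1 := by
            exact Nat.add_le_add_right (card_insert_le _ _) 1
        _ ≤ 3 := by simp
    have card2 : ∀ x y : X, ({x, y} : Finset X).card ≤ 3 := by
      intro x y
      calc ({x, y} : Finset X).card ≤ ({y} : Finset X).card + 1 := card_insert_le _ _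
        _ ≤ 3 := by simp
    have card1 : ∀ x : X, ({x} : Finset X).card ≤ 3 := by intro x; simp
    -- L0 : if the choice is outside the frame, it equals the default x0
    have L0 : ∀ F ∈ D, c F ∉ F → c F = x0 := by
      intro F hF hcF
      exact h F hF ∅ (hD ∅ (by simp)) (empty_subset F) (by simpa using hcF)
    -- Lsub : IIFA specialized to subsets containing the choice
    have Lsub : ∀ F ∈ D, ∀ F' : Finset X, F'.card ≤ 3 → F' ⊆ F → c F ∈ F' → c F = c F' := by
      intro F hF F' hc hsub hmem
      exact h F hF F' (hD F' hc) hsub (by simp [hmem])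
    -- the set of "self-chosen" elements
    set S : Finset X := Finset.univ.filter (fun x => c {x} = x) with hS
    have hmemS : ∀ x, x ∈ S ↔ c {x} = x := by intro x; simp [hS]
    have hx0S : x0 ∈ S := by
      rw [hmemS]
      by_contra hne
      have hnm : c {x0} ∉ ({x0} : Finset X) := by simpa using hne
      exact hne (L0 {x0} (hD _ (card1 x0)) hnm ▸ L0 {x0} (hD _ (card1 x0)) hnm)
    -- choice inside frame is self-chosen and beats all pairs
    have Lchoose : ∀ F ∈ D, c F ∈ F → c F ∈ S ∧ ∀ y ∈ F, c {c F, y} = c F := by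
      intro F hF hcF
      constructor
      · rw [hmemS]
        exact (Lsub F hF {c F} (card1 _) (by simpa using hcF) (by simp)).symm
      · intro y hy
        exact (Lsub F hF {c F, y} (card2 _ _) (by
          intro z hz; simp at hz; rcases hz with rfl | rfl <;> assumption)
          (by simp)).symm
    -- if F meets S, the choice is inside F
    have LS : ∀ F ∈ D, (F ∩ S).Nonempty → c F ∈ F := by
      intro F hF hne
      obtain ⟨x, hx⟩ := hne
      simp only [mem_inter] at hx
      by_contra hcF
      have h1 : c F = x0 := L0 F hF hcF
      have h2 : c F = c {x} := by
        refine h F hF {x} (hD _ (card1 x)) (by simpa using hx.1) ?_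
        simp only [mem_sdiff]; exact fun hc => hcF hc.1
      have h3 : c {x} = x := (hmemS x).mp hx.2
      rw [h2, h3] at hcF
      exact hcF hx.1
    -- if F misses S, the choice is the default
    have Lempty : ∀ F ∈ D, F ∩ S = ∅ → c F = x0 := by
      intro F hF hFS
      by_cases hcF : c F ∈ F
      · exfalso
        have := (Lchoose F hF hcF).1
        have : c F ∈ F ∩ S := mem_inter.mpr ⟨hcF, this⟩
        simp [hFS] at this
      · exact L0 F hF hcF
    -- pair frames: if one element is self-chosen, choice is inside
    have Lpair : ∀ x ∈ S, ∀ y : X, c {x, y} ∈ ({x, y} : Finset X) := by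
      intro x hx y
      have : (({x, y} : Finset X) ∩ S).Nonempty := ⟨x, mem_inter.mpr ⟨by simp, hx⟩⟩
      exact LS {x, y} (hD _ (card2 x y)) this
    -- transitivity through triples
    have Ltrans : ∀ x ∈ S, ∀ y ∈ S, ∀ z ∈ S, x ≠ y → y ≠ z → x ≠ z →
        c {x, y} = x → c {y, z} = y → c {x, z} = x := by
      intro x hx y hy z hz hxy hyz hxz hcxy hcyz
      have hT : ({x, y, z} : Finset X) ∈ D := hD _ (card3 x y z)
      have hTS : (({x, y, z} : Finset X) ∩ S).Nonempty :=
        ⟨x, mem_inter.mpr ⟨by simp, hx⟩⟩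
      have hcT : c {x, y, z} ∈ ({x, y, z} : Finset X) := LS _ hT hTS
      have hbeats := (Lchoose _ hT hcT).2
      simp only [mem_insert, mem_singleton] at hcT
      rcases hcT with hc | hc | hc
      · have := hbeats z (by simp)
        rw [hc] at this
        exact this
      · exfalso
        have := hbeats x (by simp)
        rw [hc] at this
        rw [show ({y, x} : Finset X) = {x, y} by rw [Finset.pair_comm]] at this
        rw [hcxy] at this
        exact hxy this
      · exfalso
        have := hbeats y (by simp)
        rw [hc] at this
        rw [show ({z, y} : Finset X) = {y, z} by rw [Finset.pair_comm]] at this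
        rw [hcyz] at this
        exact hyz this
    -- rank function
    set r : X → ℕ := fun x => (S.filter (fun y => c {x, y} = x ∧ y ≠ x)).card with hr
    -- rank is strictly monotone along "beats"
    have Lrank : ∀ x ∈ S, ∀ y ∈ S, x ≠ y → c {x, y} = x → r y < r x := by
      intro x hx y hy hxy hcxy
      have hsub : (S.filter (fun z => c {y, z} = y ∧ z ≠ y)) ⊆
          (S.filter (fun z => c {x, z} = x ∧ z ≠ x)) := by
        intro z hz
        simp only [mem_filter] at hz ⊢
        obtain ⟨hzS, hcyz, hzy⟩ := hz
        have hzx : z ≠ x := by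
          rintro rfl
          rw [Finset.pair_comm, hcxy] at hcyz
          exact hxy hcyz
        refine ⟨hzS, ?_, hzx⟩
        exact Ltrans x hx y hy z hzS hxy (Ne.symm hzy) (Ne.symm hzx) hcxy hcyz
      have hylem : y ∈ (S.filter (fun z => c {x, z} = x ∧ z ≠ x)) := by
        simp only [mem_filter]
        exact ⟨hy, hcxy, Ne.symm hxy⟩
      have hynot : y ∉ (S.filter (fun z => c {y, z} = y ∧ z ≠ y)) := by
        simp
      exact card_lt_card ((Finset.ssubset_iff_of_subset hsub).mpr ⟨y, hylem, hynot⟩)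
    -- numeric construction
    have hne : Nonempty X := ⟨x0⟩
    set n : ℝ := (Fintype.card X : ℝ) with hn
    have hn1 : (1:ℝ) ≤ n := by
      rw [hn]; exact_mod_cast Fintype.card_pos
    have hn0 : (0:ℝ) < n := lt_of_lt_of_le one_pos hn1
    set e : X → ℕ := fun y => (Fintype.equivFin X y : ℕ) with he
    have he_inj : Function.Injective e := fun a b hab =>
      (Fintype.equivFin X).injective (Fin.ext hab)
    have he_lt : ∀ y, (e y : ℝ) < n := fun y => by
      rw [hn]; exact_mod_cast (Fintype.equivFin X y).isLt
    set u : X → ℝ := fun y => if y = x0 then 0 else -2 + (e y : ℝ) / n with hu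
    set v : X → ℝ := fun y => if y ∈ S then ((1 + (r y : ℝ)) - u y) else 1/(2*n) with hv
    have hu_x0 : u x0 = 0 := by simp [hu]
    have hu_neg : ∀ y, y ≠ x0 → u y < -1 := by
      intro y hy
      have h1 : (e y : ℝ) / n < 1 := (div_lt_one hn0).mpr (he_lt y)
      simp only [hu, if_neg hy]
      linarith
    have hu_le : ∀ y, u y ≤ 0 := by
      intro y
      by_cases hy : y = x0
      · rw [hy, hu_x0]
      · linarith [hu_neg y hy]
    have hwS : ∀ y ∈ S, u y + v y = 1 + (r y : ℝ) := by
      intro y hy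
      simp only [hv, if_pos hy]
      ring
    have hwS1 : ∀ y ∈ S, (1:ℝ) ≤ u y + v y := by
      intro y hy
      rw [hwS y hy]
      have : (0:ℝ) ≤ (r y : ℝ) := Nat.cast_nonneg _
      linarith
    have hwn : ∀ y, y ∉ S → u y + v y = u y + 1/(2*n) := by
      intro y hy
      simp only [hv, if_neg hy]
    have hwn_neg : ∀ y, y ∉ S → u y + v y < -1/2 := by
      intro y hy
      have hyx0 : y ≠ x0 := fun hyx => hy (hyx ▸ hx0S)
      have h1 : 1/(2*n) ≤ 1/2 := by
        apply div_le_div_of_nonneg_left (by norm_num) (by norm_num)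
        linarith
      rw [hwn y hy]
      linarith [hu_neg y hyx0]
    have hv_nonneg : ∀ y, 0 ≤ v y := by
      intro y
      by_cases hy : y ∈ S
      · simp only [hv, if_pos hy]
        have : (0:ℝ) ≤ (r y : ℝ) := Nat.cast_nonneg _
        linarith [hu_le y]
      · simp only [hv, if_neg hy]
        positivity
    -- distinctness lemmas
    have dU : ∀ y z : X, y ≠ z → u y ≠ u z := by
      intro y z hyz heq
      by_cases hy : y = x0
      · subst hy
        have hz : z ≠ x0 := fun hz => hyz hz.symm
        rw [hu_x0] at heq
        linarith [hu_neg z hz, heq.symm.le]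
      · by_cases hz : z = x0
        · subst hz
          rw [hu_x0] at heq
          linarith [hu_neg y hy, heq.le]
        · simp only [hu, if_neg hy, if_neg hz] at heq
          have h2 : (e y : ℝ) / n = (e z : ℝ) / n := by linarith
          have h3 : (e y : ℝ) = (e z : ℝ) := by
            field_simp at h2
            exact_mod_cast h2
          exact hyz (he_inj (by exact_mod_cast h3))
    have dW : ∀ y z : X, y ≠ z → u y + v y ≠ u z + v z := by
      intro y z hyz heq
      by_cases hy : y ∈ S
      · by_cases hz : z ∈ S
        · rw [hwS y hy, hwS z hz] at heq
          have hr : r y = r z := by exact_mod_cast (by linarith : (r y : ℝ) = (r z : ℝ))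
          have hc := Lpair y hy z
          simp only [mem_insert, mem_singleton] at hc
          rcases hc with hc | hc
          · have := Lrank y hy z hz hyz hc
            omega
          · rw [Finset.pair_comm] at hc
            have := Lrank z hz y hy (Ne.symm hyz) hc
            omega
        · linarith [hwS1 y hy, hwn_neg z hz, heq.le]
      · by_cases hz : z ∈ S
        · linarith [hwS1 z hz, hwn_neg y hy, heq.symm.le]
        · rw [hwn y hy, hwn z hz] at heq
          exact dU y z hyz (by linarith)
    have dUW : ∀ y z : X, u y + v y ≠ u z := by
      intro y z heq
      by_cases hy : y ∈ S
      · linarith [hwS1 y hy, hu_le z, heq.le]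
      · have hyx0 : y ≠ x0 := fun hx => hy (hx ▸ hx0S)
        rw [hwn y hy] at heq
        have h2n : 1/(2*n) ≤ 1/2 := by
          apply div_le_div_of_nonneg_left (by norm_num) (by norm_num)
          linarith
        by_cases hz : z = x0
        · subst hz
          rw [hu_x0] at heq
          linarith [hu_neg y hyx0]
        · simp only [hu, if_neg hyx0, if_neg hz] at heq
          have h2 : (e y : ℝ)/n + 1/(2*n) = (e z : ℝ)/n := by linarith
          have h3 : 2*(e y : ℝ) + 1 = 2*(e z : ℝ) := by
            field_simp at h2
            have h3' : n * n * (2*(e y : ℝ) + 1) = n * n * (2*(e z : ℝ)) := by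
              linear_combination (n * n) * h2
            exact mul_left_cancel₀ (by positivity : (n*n:ℝ) ≠ 0) h3'

          have h4 : 2 * e y + 1 = 2 * e z := by exact_mod_cast h3
          omega
    refine ⟨u, v, hv_nonneg, ?_⟩
    intro F hF
    constructor
    · intro a b hab
      by_contra hab'
      simp only [UF] at hab
      split_ifs at hab with h1 h2 h2
      · exact dW a b hab' hab
      · exact dUW a b (by linarith)
      · exact dUW b a (by linarith)
      · exact dU a b hab' (by linarith)
    · intro y
      by_cases hFS : (F ∩ S).Nonempty
      · have hcF : c F ∈ F := LS F hF hFS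
        obtain ⟨hcS, hbeats⟩ := Lchoose F hF hcF
        have hUm : UF u v F (c F) = 1 + (r (c F) : ℝ) := by
          simp only [UF, if_pos hcF]
          exact hwS _ hcS
        by_cases hyF : y ∈ F
        · by_cases hym : y = c F
          · subst hym; exact le_refl _
          · by_cases hyS : y ∈ S
            · have hb := hbeats y hyF
              have hlt := Lrank (c F) hcS y hyS (fun hc => hym hc.symm) hb
              have hUy : UF u v F y = 1 + (r y : ℝ) := by
                simp only [UF, if_pos hyF]
                exact hwS _ hyS
              rw [hUy, hUm]
              have : (r y : ℝ) < (r (c F) : ℝ) := by exact_mod_cast hlt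
              linarith
            · have hUy : UF u v F y = u y + v y := by simp [UF, hyF]
              rw [hUy, hUm]
              have h0 : (0:ℝ) ≤ (r (c F) : ℝ) := Nat.cast_nonneg _
              linarith [hwn_neg y hyS]
        · have hUy : UF u v F y = u y := by simp [UF, hyF]
          rw [hUy, hUm]
          have h0 : (0:ℝ) ≤ (r (c F) : ℝ) := Nat.cast_nonneg _
          linarith [hu_le y]
      · have hFS' : F ∩ S = ∅ := not_nonempty_iff_eq_empty.mp hFS
        have hcF : c F = x0 := Lempty F hF hFS'
        have hx0F : x0 ∉ F := fun hx => hFS ⟨x0, mem_inter.mpr ⟨hx, hx0S⟩⟩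
        have hUm : UF u v F (c F) = 0 := by
          rw [hcF]
          simp [UF, hx0F, hu_x0]
        rw [hUm]
        by_cases hyF : y ∈ F
        · have hyS : y ∉ S := fun hy => hFS ⟨y, mem_inter.mpr ⟨hyF, hy⟩⟩
          have hUy : UF u v F y = u y + v y := by simp [UF, hyF]
          rw [hUy]
          linarith [hwn_neg y hyS]
        · have hUy : UF u v F y = u y := by simp [UF, hyF]
          rw [hUy]
          exact hu_le y
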